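/- In Ruleset D of Quantum Nim (where any nonempty superposition of classical moves, including a single classical move, is allowed), a superposition of single Nim heaps whose largest heap has size k has Grundy value k. -/
import Mathlib


namespace QGame

variable {Pos Move : Type} [DecidableEq Pos]

/-- Result of applying the superposed move `M` (a finite set of classical move
labels) to the superposition `S` of classical positions: the set of all results
of a classical move of `M` applied to a realisation where it is legal. -/
def qApply (Γ : Pos → Move → Option Pos) (S : Finset Pos) (M : Finset Move) :
    Finset Pos :=
  S.biUnion fun G => M.biUnion fun m => (Γ G m).toFinset

/-- The classical move `m` is legal in at least one realisation of `S`. -/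
def MoveLegal (Γ : Pos → Move → Option Pos) (S : Finset Pos) (m : Move) : Prop :=
  ∃ G ∈ S, (Γ G m).isSome

/-- Basic legality of a Q-move: nonempty, and each classical move is legal
in at least one realisation. -/
def QBase (Γ : Pos → Move → Option Pos) (S : Finset Pos) (M : Finset Move) : Prop :=
  M.Nonempty ∧ ∀ m ∈ M, MoveLegal Γ S m

/-- Ruleset A : superpositions of at least two distinct classical moves. -/
def QLegalA (Γ : Pos → Move → Option Pos) (S : Finset Pos) (M : Finset Move) : Prop :=
  QBase Γ S M ∧ 2 ≤ M.card

/-- Ruleset B : as A, except a lone classical move may be played when it is the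
only legal classical move over all realisations. -/
def QLegalB (Γ : Pos → Move → Option Pos) (S : Finset Pos) (M : Finset Move) : Prop :=
  QBase Γ S M ∧ (2 ≤ M.card ∨ ∀ m, MoveLegal Γ S m → m ∈ M)

/-- Ruleset C : a lone classical move must be legal in every realisation. -/
def QLegalC (Γ : Pos → Move → Option Pos) (S : Finset Pos) (M : Finset Move) : Prop :=
  QBase Γ S M ∧ (2 ≤ M.card ∨ ∀ G ∈ S, ∀ m ∈ M, (Γ G m).isSome)

/-- A single classical move is C'-allowed: legal in every realisation where the
mover still has at least one classical move. -/
def SingleLegalC' (Γ : Pos → Move → Option Pos) (S : Finset Pos) (m : Move) : Prop :=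
  ∀ G ∈ S, (∃ m', (Γ G m').isSome) → (Γ G m).isSome

/-- Ruleset C'. -/
def QLegalC' (Γ : Pos → Move → Option Pos) (S : Finset Pos) (M : Finset Move) : Prop :=
  QBase Γ S M ∧ (2 ≤ M.card ∨ ∀ m ∈ M, SingleLegalC' Γ S m)

/-- Ruleset D : any nonempty superposition of legal classical moves. -/
def QLegalD (Γ : Pos → Move → Option Pos) (S : Finset Pos) (M : Finset Move) : Prop :=
  QBase Γ S M

def optA (Γ : Pos → Move → Option Pos) (S : Finset Pos) : Set (Finset Pos) :=
  {T | ∃ M, QLegalA Γ S M ∧ T = qApply Γ S M}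
def optB (Γ : Pos → Move → Option Pos) (S : Finset Pos) : Set (Finset Pos) :=
  {T | ∃ M, QLegalB Γ S M ∧ T = qApply Γ S M}
def optC (Γ : Pos → Move → Option Pos) (S : Finset Pos) : Set (Finset Pos) :=
  {T | ∃ M, QLegalC Γ S M ∧ T = qApply Γ S M}
def optC' (Γ : Pos → Move → Option Pos) (S : Finset Pos) : Set (Finset Pos) :=
  {T | ∃ M, QLegalC' Γ S M ∧ T = qApply Γ S M}
def optD (Γ : Pos → Move → Option Pos) (S : Finset Pos) : Set (Finset Pos) :=
  {T | ∃ M, QLegalD Γ S M ∧ T = qApply Γ S M}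

/-- `NPos opt p` : under normal play, the player to move from `p` wins,
i.e. there is a move to a position all of whose options are again `NPos`
(that is, to a previous-player-win position). -/
inductive NPos {α : Type*} (opt : α → Set α) : α → Prop where
  | mk (p q : α) (hq : q ∈ opt p) (h : ∀ r, r ∈ opt q → NPos opt r) :
      NPos opt p

/-- `PPos opt p` : `p` is a previous-player win (the second player wins)
under normal play: every option is a next-player win. -/
def PPos {α : Type*} (opt : α → Set α) (p : α) : Prop :=
  ∀ q ∈ opt p, NPos opt q

/-- Options of the sum of a game with a classical Nim heap: move in the game
component, or decrease the heap component. -/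
def sumNimOpt {α : Type*} (opt : α → Set α) : α × ℕ → Set (α × ℕ) :=
  fun x => {y | (y.1 ∈ opt x.1 ∧ y.2 = x.2) ∨ (y.1 = x.1 ∧ y.2 < x.2)}

/-- `HasGrundy opt p n` : position `p` has Sprague–Grundy value `n` (the value
obtained by the mex rule). By the Sprague–Grundy theorem this holds iff the sum
of `p` with a Nim heap of `n` tokens is a previous-player win. -/
def HasGrundy {α : Type*} (opt : α → Set α) (p : α) (n : ℕ) : Prop :=
  PPos (sumNimOpt opt) (p, n)

/-- Classical single-heap Nim: from a heap of `n` tokens, the move labelled `x`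
removes `x` tokens, legal when `1 ≤ x ≤ n`. -/
def nimΓ : ℕ → ℕ → Option ℕ := fun n x =>
  if 1 ≤ x ∧ x ≤ n then some (n - x) else none

end QGame

namespace QGame

lemma nimΓ_eq_some {n x r : ℕ} : nimΓ n x = some r ↔ 1 ≤ x ∧ x ≤ n ∧ n - x = r := by
  unfold nimΓ
  split <;> simp_all

lemma mem_qApply_nim {S M : Finset ℕ} {r : ℕ} :
    r ∈ qApply nimΓ S M ↔ ∃ G ∈ S, ∃ x ∈ M, 1 ≤ x ∧ x ≤ G ∧ G - x = r := by
  simp only [qApply, Finset.mem_biUnion, Option.mem_toFinset, Option.mem_def, nimΓ_eq_some]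

lemma key (k : ℕ) :
    ∀ S : Finset ℕ, ∀ hS : S.Nonempty, S.max' hS = k →
      PPos (sumNimOpt (optD nimΓ)) (S, k) := by
  induction k using Nat.strong_induction_on with
  | _ k IH =>
    intro S hS hmax
    intro q hq
    rcases hq with ⟨hT, heq⟩ | ⟨heq, hlt⟩
    · -- move in the quantum component: q = (T, k)
      obtain ⟨M, ⟨⟨m0, hm0M⟩, hleg⟩, hTE⟩ := hT
      -- T := q.1 is nonempty
      obtain ⟨G0, hG0, hs0⟩ := hleg m0 hm0M
      obtain ⟨r0, hr0⟩ := Option.isSome_iff_exists.mp hs0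
      have hr0T : r0 ∈ q.1 := by
        rw [hTE, mem_qApply_nim]
        obtain ⟨h1, h2, h3⟩ := nimΓ_eq_some.mp hr0
        exact ⟨G0, hG0, m0, hm0M, h1, h2, h3⟩
      have hTne : q.1.Nonempty := ⟨r0, hr0T⟩
      set t := q.1.max' hTne with ht
      -- every element of T is < k
      have hbound : ∀ r ∈ q.1, r < k := by
        intro r hr
        rw [hTE, mem_qApply_nim] at hr
        obtain ⟨G, hG, x, hx, h1, h2, h3⟩ := hr
        have : G ≤ k := hmax ▸ Finset.le_max' S G hG
        omega
      have htk : t < k := hbound _ (q.1.max'_mem hTne)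
      refine NPos.mk _ (q.1, t) (Or.inr ⟨rfl, ?_⟩) ?_
      · rw [heq]; exact htk
      · intro r hr
        exact IH t htk q.1 hTne rfl r hr
    · -- move in the nim-heap component: q = (S, m) with m < k
      have hkS : k ∈ S := hmax ▸ S.max'_mem hS
      set m := q.2 with hm
      have hmk : m < k := by rw [hm, ← hmax] at hlt ⊢; exact hlt
      set T := qApply nimΓ S {k - m} with hTdef
      have hTopt : T ∈ optD nimΓ S := by
        refine ⟨{k - m}, ⟨⟨k - m, Finset.mem_singleton_self _⟩, ?_⟩, rfl⟩
        intro x hx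
        rw [Finset.mem_singleton] at hx
        subst hx
        refine ⟨k, hkS, ?_⟩
        rw [Option.isSome_iff_exists]
        exact ⟨m, nimΓ_eq_some.mpr ⟨by omega, by omega, by omega⟩⟩
      have hTne : T.Nonempty := by
        refine ⟨m, ?_⟩
        rw [hTdef, mem_qApply_nim]
        exact ⟨k, hkS, k - m, Finset.mem_singleton_self _, by omega, by omega, by omega⟩
      have hTmax : T.max' hTne = m := by
        apply le_antisymm
        · apply Finset.max'_le
          intro r hr
          rw [hTdef, mem_qApply_nim] at hr
          obtain ⟨G, hG, x, hx, h1, h2, h3⟩ := hr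
          rw [Finset.mem_singleton] at hx
          have : G ≤ k := hmax ▸ Finset.le_max' S G hG
          omega
        · apply Finset.le_max'
          rw [hTdef, mem_qApply_nim]
          exact ⟨k, hkS, k - m, Finset.mem_singleton_self _, by omega, by omega, by omega⟩
      refine NPos.mk _ (T, m) (Or.inl ⟨?_, rfl⟩) ?_
      · rw [heq]; exact hTopt
      · intro r hr
        exact IH m hmk T hTne hTmax r hr

/-- In Ruleset D of Quantum Nim, a superposition of single Nim
heaps whose largest heap has size `k` has Grundy value `k`. -/
theorem rulesetD_single_heap_value (S : Finset ℕ) (hS : S.Nonempty) (k : ℕ)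
    (hmax : S.max' hS = k) :
    HasGrundy (optD nimΓ) S k := by
  subst hmax
  exact key _ S hS rfl

end QGame
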